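/- Fix natural numbers n, k with k ≤ n, and a natural number a. Then the number of ordered pairs (p, q), where p, q : {1,...,n} → {+1, −1} are sequences each with exactly k entries equal to +1, such that Σ_{i=1}^n |P_i − Q_i| = 2a (where P_i = p_1 + ... + p_i and Q_i = q_1 + ... + q_i are the partial sums), equals the number of step words r : {1,...,n} → {U, D, O1, O2} such that H_n = 0, exactly k of the steps of r lie in {U, O1}, and Σ_{i=1}^n |H_i| = a (where H_i is the sum of the weights of the first i steps of r, with weights w(U)=1, w(D)=−1, w(O1)=w(O2)=0). -/

import Mathlib

/-- The four kinds of steps: up, down, and two colors of horizontal steps. -/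
inductive Step where
  | U : Step
  | D : Step
  | O1 : Step
  | O2 : Step
deriving DecidableEq

instance : Fintype Step where
  elems := {Step.U, Step.D, Step.O1, Step.O2}
  complete := by intro x; cases x <;> simp

/-- Weight of a step: U has weight 1, D has weight −1, O1 and O2 weight 0. -/
def Step.wt : Step → ℤ
  | .U => 1
  | .D => -1
  | .O1 => 0
  | .O2 => 0

/-- Height of a step word after its first `i` steps. -/
def stepHeight {n : ℕ} (r : Fin n → Step) (i : ℕ) : ℤ :=
  ∑ j ∈ Finset.univ.filter (fun j : Fin n => (j : ℕ) < i), (r j).wt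

/-- Partial sum of a `±1`-sequence after its first `i` entries. -/
def partialSum {n : ℕ} (p : Fin n → ℤ) (i : ℕ) : ℤ :=
  ∑ j ∈ Finset.univ.filter (fun j : Fin n => (j : ℕ) < i), p j

def stepOf (x y : ℤ) : Step :=
  if x = 1 then (if y = 1 then .O1 else .U) else (if y = 1 then .D else .O2)

def fstOf : Step → ℤ
  | .U => 1 | .D => -1 | .O1 => 1 | .O2 => -1

def sndOf : Step → ℤ
  | .U => -1 | .D => 1 | .O1 => 1 | .O2 => -1

lemma stepOf_of (s : Step) : stepOf (fstOf s) (sndOf s) = s := by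
  cases s <;> simp [stepOf, fstOf, sndOf]

lemma fstOf_stepOf {x y : ℤ} (hx : x = 1 ∨ x = -1) (hy : y = 1 ∨ y = -1) :
    fstOf (stepOf x y) = x := by
  rcases hx with h | h <;> rcases hy with h' | h' <;> simp [stepOf, h, h', fstOf]

lemma sndOf_stepOf {x y : ℤ} (hx : x = 1 ∨ x = -1) (hy : y = 1 ∨ y = -1) :
    sndOf (stepOf x y) = y := by
  rcases hx with h | h <;> rcases hy with h' | h' <;> simp [stepOf, h, h', sndOf]

lemma two_mul_wt (s : Step) : 2 * s.wt = fstOf s - sndOf s := by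
  cases s <;> simp [Step.wt, fstOf, sndOf]

lemma mem_UO1 (s : Step) : (s = .U ∨ s = .O1) ↔ fstOf s = 1 := by
  cases s <;> simp [fstOf]

lemma mem_DO1 (s : Step) : (s = .D ∨ s = .O1) ↔ sndOf s = 1 := by
  cases s <;> simp [sndOf]

lemma wt_eq_ite (s : Step) :
    s.wt = (if s = .U ∨ s = .O1 then (1 : ℤ) else 0) -
      (if s = .D ∨ s = .O1 then (1 : ℤ) else 0) := by
  cases s <;> simp [Step.wt]

lemma two_mul_stepHeight {n : ℕ} (r : Fin n → Step) (i : ℕ) :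
    2 * stepHeight r i =
      partialSum (fun j => fstOf (r j)) i - partialSum (fun j => sndOf (r j)) i := by
  unfold stepHeight partialSum
  rw [Finset.mul_sum, ← Finset.sum_sub_distrib]
  exact Finset.sum_congr rfl fun j _ => two_mul_wt (r j)

lemma stepHeight_total {n : ℕ} (r : Fin n → Step) :
    stepHeight r n =
      ((Finset.univ.filter fun i => r i = Step.U ∨ r i = Step.O1).card : ℤ) -
      ((Finset.univ.filter fun i => r i = Step.D ∨ r i = Step.O1).card : ℤ) := by
  unfold stepHeight
  have h : (Finset.univ.filter (fun j : Fin n => (j : ℕ) < n)) = Finset.univ := by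
    apply Finset.filter_true_of_mem; intro j _; exact j.isLt
  rw [h]
  rw [show (∑ j : Fin n, (r j).wt) =
      ∑ j : Fin n, ((if r j = .U ∨ r j = .O1 then (1 : ℤ) else 0) -
        (if r j = .D ∨ r j = .O1 then (1 : ℤ) else 0)) from
    Finset.sum_congr rfl fun j _ => wt_eq_ite (r j)]
  rw [Finset.sum_sub_distrib, Finset.sum_boole, Finset.sum_boole]

/-- The bijection $A$: ordered pairs of $±1$-sequences of length $n$, each with
exactly $k$ entries equal to $+1$, whose partial sums satisfy
$\sum_{i=1}^n |P_i - Q_i| = 2a$, are equinumerous with step words of length $n$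
with final height $0$, exactly $k$ steps in $\{U, O_1\}$, and
$\sum_{i=1}^n |H_i| = a$. -/
theorem card_pairs_eq_card_bilateralMotzkin (n k a : ℕ) (hk : k ≤ n) :
    Nat.card {pq : (Fin n → ℤ) × (Fin n → ℤ) //
        (∀ i, pq.1 i = 1 ∨ pq.1 i = -1) ∧ (∀ i, pq.2 i = 1 ∨ pq.2 i = -1) ∧
        (Finset.univ.filter fun i => pq.1 i = 1).card = k ∧
        (Finset.univ.filter fun i => pq.2 i = 1).card = k ∧
        (∑ i ∈ Finset.range n, |partialSum pq.1 (i + 1) - partialSum pq.2 (i + 1)|)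
          = 2 * (a : ℤ)}
      = Nat.card {r : Fin n → Step //
        stepHeight r n = 0 ∧
        (Finset.univ.filter fun i => r i = Step.U ∨ r i = Step.O1).card = k ∧
        (∑ i ∈ Finset.range n, |stepHeight r (i + 1)|) = (a : ℤ)} := by
  apply Nat.card_congr
  refine
    { toFun := fun x => ⟨fun i => stepOf (x.1.1 i) (x.1.2 i), ?_⟩
      invFun := fun y => ⟨(fun i => fstOf (y.1 i), fun i => sndOf (y.1 i)), ?_⟩
      left_inv := ?_
      right_inv := ?_ }
  · obtain ⟨⟨p, q⟩, hp, hq, hkp, hkq, hsum⟩ := x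
    set r : Fin n → Step := fun i => stepOf (p i) (q i) with hr
    have hfst : ∀ i, fstOf (r i) = p i := fun i => fstOf_stepOf (hp i) (hq i)
    have hsnd : ∀ i, sndOf (r i) = q i := fun i => sndOf_stepOf (hp i) (hq i)
    have hA : (Finset.univ.filter fun i => r i = Step.U ∨ r i = Step.O1).card = k := by
      rw [← hkp]; congr 1
      apply Finset.filter_congr
      intro i _
      rw [mem_UO1, hfst]
    have hB : (Finset.univ.filter fun i => r i = Step.D ∨ r i = Step.O1).card = k := by
      rw [← hkq]; congr 1
      apply Finset.filter_congr
      intro i _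
      rw [mem_DO1, hsnd]
    have hH : ∀ i, 2 * stepHeight r i = partialSum p i - partialSum q i := by
      intro i
      rw [two_mul_stepHeight]
      congr 1 <;> unfold partialSum <;> exact Finset.sum_congr rfl fun j _ => by
        simp [hfst, hsnd]
    refine ⟨?_, hA, ?_⟩
    · have := stepHeight_total r
      rw [hA, hB] at this
      omega
    · have h2 : 2 * ∑ i ∈ Finset.range n, |stepHeight r (i + 1)| = 2 * (a : ℤ) := by
        rw [Finset.mul_sum]
        rw [← hsum]
        exact Finset.sum_congr rfl fun i _ => by
          rw [← hH, abs_mul]; norm_num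
      omega
  · obtain ⟨r, h0, hkr, hs⟩ := y
    have hA : (Finset.univ.filter fun i => fstOf (r i) = 1).card = k := by
      rw [← hkr]; congr 1
      apply Finset.filter_congr
      intro i _
      rw [mem_UO1]
    have hB : (Finset.univ.filter fun i => sndOf (r i) = 1).card = k := by
      have := stepHeight_total r
      rw [h0, hkr] at this
      have hDO1 : ((Finset.univ.filter fun i => r i = Step.D ∨ r i = Step.O1).card) = k := by
        omega
      rw [← hDO1]; congr 1
      apply Finset.filter_congr
      intro i _
      rw [mem_DO1]
    refine ⟨fun i => by cases h : r i <;> simp [fstOf, h],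
            fun i => by cases h : r i <;> simp [sndOf, h], hA, hB, ?_⟩
    have : ∀ i, |partialSum (fun j => fstOf (r j)) (i + 1) -
        partialSum (fun j => sndOf (r j)) (i + 1)| = 2 * |stepHeight r (i + 1)| := by
      intro i
      rw [← two_mul_stepHeight, abs_mul]
      norm_num
    rw [Finset.sum_congr rfl fun i _ => this i, ← Finset.mul_sum, hs]
  · rintro ⟨⟨p, q⟩, hp, hq, -⟩
    apply Subtype.ext
    simp only
    ext i
    · exact fstOf_stepOf (hp i) (hq i)
    · exact sndOf_stepOf (hp i) (hq i)
  · rintro ⟨r, -⟩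
    apply Subtype.ext
    funext i
    exact stepOf_of (r i)
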